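/- For each n ≥ 1, let h_n be a smooth function on (−πn, πn) whose derivative is h_n'(t) = (1/n) Σ_{k=1}^n (1 − |z_{k,n}|²)/|e^{it/n} − z_{k,n}|², with z_{k,n} in the open unit disk D. Assume {h_n} converges almost everywhere on ℝ to some nondecreasing function h, and that lim_{n→∞} ( n · min_{1≤j≤n} |1 − z_{j,n}| ) = +∞. Then h is affine, h(t) = c_1 t + c_2, and {h_n} converges to h uniformly on compact subsets of ℝ. -/

import Mathlib

open MeasureTheory Metric Filter Topology Set
open scoped Real ENNReal Topology

noncomputable section

/-- Normalized arc-length (Lebesgue) measure on the unit circle `{|z| = 1} ⊆ ℂ`,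
normalized so that the total mass is `1`. -/
def mT : Measure ℂ :=
  (ENNReal.ofReal (2 * Real.pi))⁻¹ •
    (volume.restrict (Set.Ioc (-Real.pi) Real.pi)).map
      (fun t : ℝ => Complex.exp ((t : ℂ) * Complex.I))

/-- Poisson extension of a (finite) measure on the unit circle:
`P(ν, z) = ∫ (1 - |z|²)/|1 - ξ̄ z|² dν(ξ)`. -/
def poissonM (ν : Measure ℂ) (z : ℂ) : ℝ :=
  ∫ ξ, (1 - ‖z‖ ^ 2) / ‖1 - (starRingEnd ℂ) ξ * z‖ ^ 2 ∂ν

/-- Poisson extension of a real-valued function on the unit circle. -/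
def poissonF (v : ℂ → ℝ) (z : ℂ) : ℝ :=
  ∫ ξ, v ξ * ((1 - ‖z‖ ^ 2) / ‖1 - (starRingEnd ℂ) ξ * z‖ ^ 2) ∂mT

/-- Poisson extension of a complex-valued function on the unit circle. -/
def poissonFC (v : ℂ → ℂ) (z : ℂ) : ℂ :=
  ∫ ξ, v ξ * (((1 - ‖z‖ ^ 2) / ‖1 - (starRingEnd ℂ) ξ * z‖ ^ 2 : ℝ) : ℂ) ∂mT

/-- The entropy function `K(ν, z) = log P(ν, z) - P(log w, z)`, where `w = dν/dm`. -/
def entropyM (ν : Measure ℂ) (z : ℂ) : ℝ :=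
  Real.log (poissonM ν z) -
    poissonF (fun ξ => Real.log ((ν.rnDeriv mT ξ).toReal)) z

/-- The entropy function of a weight: `K(v dm, z) = log P(v, z) - P(log v, z)`. -/
def entropyF (v : ℂ → ℝ) (z : ℂ) : ℝ :=
  Real.log (poissonF v z) - poissonF (fun ξ => Real.log (v ξ)) z

/-- A probability measure on the unit circle belongs to the Szegő class if
`log w ∈ L¹(T)` where `w` is the density of its absolutely continuous part. -/
def SzegoClass (μ : Measure ℂ) : Prop :=
  IsProbabilityMeasure μ ∧ μ (Metric.sphere (0 : ℂ) 1)ᶜ = 0 ∧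
    Integrable (fun ξ => Real.log ((μ.rnDeriv mT ξ).toReal)) mT

/-- `f` is the Schur function of the measure `μ`: it is an analytic contraction on the
open unit disk such that `(1 + z f(z))/(1 - z f(z)) = ∫ (1 + ξ̄ z)/(1 - ξ̄ z) dμ(ξ)`. -/
def IsSchurFunction (μ : Measure ℂ) (f : ℂ → ℂ) : Prop :=
  DifferentiableOn ℂ f (ball (0 : ℂ) 1) ∧
  (∀ z ∈ ball (0 : ℂ) 1, ‖f z‖ ≤ 1) ∧
  ∀ z ∈ ball (0 : ℂ) 1,
    (1 + z * f z) / (1 - z * f z)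
      = ∫ ξ, (1 + (starRingEnd ℂ) ξ * z) / (1 - (starRingEnd ℂ) ξ * z) ∂μ

/-- `f : ℕ → ℂ → ℂ` is the family of Schur iterates of `μ`: `f 0` is the Schur function
of `μ` and `z f_{n+1}(z) = (f_n(z) - f_n(0))/(1 - conj (f_n(0)) f_n(z))`. -/
def IsSchurFamily (μ : Measure ℂ) (f : ℕ → ℂ → ℂ) : Prop :=
  IsSchurFunction μ (f 0) ∧
  ∀ n : ℕ, DifferentiableOn ℂ (f (n + 1)) (ball (0 : ℂ) 1) ∧
    (∀ z ∈ ball (0 : ℂ) 1, ‖f (n + 1) z‖ ≤ 1) ∧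
    ∀ z ∈ ball (0 : ℂ) 1,
      z * f (n + 1) z = (f n z - f n 0) / (1 - (starRingEnd ℂ) (f n 0) * f n z)

/-- `φ` is the family of orthonormal polynomials of `μ`: `deg φ_n = n`, the leading
coefficient is (real and) positive, and `(φ_n, φ_k)_{L²(μ)} = δ_{n,k}`. -/
def OrthonormalPolys (μ : Measure ℂ) (φ : ℕ → Polynomial ℂ) : Prop :=
  (∀ n : ℕ, (φ n).natDegree = n) ∧
  (∀ n : ℕ, ∃ r : ℝ, 0 < r ∧ (φ n).leadingCoeff = (r : ℂ)) ∧
  (∀ n k : ℕ, ∫ ξ, (φ n).eval ξ * (starRingEnd ℂ) ((φ k).eval ξ) ∂μ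
      = if n = k then 1 else 0)

/-- The reversed polynomial `φ*(z) = z^n conj(φ(1/z̄))`, i.e. the degree-`n` reflection
with conjugated coefficients. -/
def revStar (n : ℕ) (p : Polynomial ℂ) : Polynomial ℂ :=
  Polynomial.reflect n (p.map (starRingEnd ℂ))

/-- The Szegő function `D_μ(z) = exp ∫ log √w(ξ) (1 + ξ̄ z)/(1 - ξ̄ z) dm(ξ)`,
where `w = dμ/dm`. -/
def szegoD (μ : Measure ℂ) (z : ℂ) : ℂ :=
  Complex.exp (∫ ξ, (Real.log (Real.sqrt ((μ.rnDeriv mT ξ).toReal)) : ℂ) *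
    ((1 + (starRingEnd ℂ) ξ * z) / (1 - (starRingEnd ℂ) ξ * z)) ∂mT)

/-- The Stolz angle `S*_ρ(ξ)`: the convex hull of `ρ·D` and the point `ξ`. -/
def stolz (ρ : ℝ) (ξ : ℂ) : Set ℂ := convexHull ℝ (ball (0 : ℂ) ρ ∪ {ξ})

/-- `g` has nontangential limit `L` at the boundary point `ξ`:  `g(z) → L` as `z → ξ`
inside every Stolz angle `S*_ρ(ξ)`, `ρ ∈ (0,1)`. -/
def NontangentialLimitAt (g : ℂ → ℂ) (ξ L : ℂ) : Prop :=
  ∀ ρ ∈ Set.Ioo (0 : ℝ) 1, Tendsto g (𝓝[stolz ρ ξ \ {ξ}] ξ) (𝓝 L)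

/-- The rescaled sum of Poisson kernels
`(1/n) Σ_{k<n} (1 - |z_k|²)/|e^{it/n} - z_k|²`. -/
def kernelSum (n : ℕ) (z : ℕ → ℂ) (t : ℝ) : ℝ :=
  (1 / (n : ℝ)) * ∑ k ∈ Finset.range n,
    (1 - ‖z k‖ ^ 2) /
      ‖Complex.exp (((t / (n : ℝ) : ℝ) : ℂ) * Complex.I) - z k‖ ^ 2


lemma aux_abs_exp_mul_I_sub_one_le (θ : ℝ) :
    ‖Complex.exp ((θ : ℂ) * Complex.I) - 1‖ ≤ |θ| := by
  have hre : (Complex.exp ((θ : ℂ) * Complex.I) - 1).re = Real.cos θ - 1 := by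
    simp [Complex.exp_ofReal_mul_I_re]
  have him : (Complex.exp ((θ : ℂ) * Complex.I) - 1).im = Real.sin θ := by
    simp [Complex.exp_ofReal_mul_I_im]
  have h2 : ‖Complex.exp ((θ : ℂ) * Complex.I) - 1‖ ^ 2 = 2 - 2 * Real.cos θ := by
    rw [Complex.sq_norm, Complex.normSq_apply, hre, him]
    nlinarith [Real.sin_sq_add_cos_sq θ]
  have hcos : 1 - θ ^ 2 / 2 ≤ Real.cos θ := Real.one_sub_sq_div_two_le_cos
  nlinarith [norm_nonneg (Complex.exp ((θ : ℂ) * Complex.I) - 1), abs_nonneg θ,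
    sq_abs θ]

lemma kernelSum_zero (n : ℕ) (z : ℕ → ℂ) :
    kernelSum n z 0 = (1 / (n : ℝ)) * ∑ k ∈ Finset.range n,
      (1 - ‖z k‖ ^ 2) / ‖1 - z k‖ ^ 2 := by
  simp [kernelSum]

lemma kernelSum_nonneg (n : ℕ) (z : ℕ → ℂ) (hz : ∀ k < n, ‖z k‖ < 1) (t : ℝ) :
    0 ≤ kernelSum n z t := by
  unfold kernelSum
  apply mul_nonneg (by positivity)
  apply Finset.sum_nonneg
  intro k hk
  have := (hz k (Finset.mem_range.mp hk)).le
  have h1 : (0:ℝ) ≤ 1 - ‖z k‖ ^ 2 := by nlinarith [norm_nonneg (z k)]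
  positivity

/-- Two-sided estimate for the kernel sum at bounded `t`. -/
lemma kernelSum_est (n : ℕ) (hn : 1 ≤ n) (z : ℕ → ℂ)
    (hz : ∀ k < n, ‖z k‖ < 1)
    (md : ℝ) (hmd : 0 < md) (hlb : ∀ k < n, md ≤ ‖1 - z k‖)
    (ε : ℝ) (hε0 : 0 < ε) (hε1 : ε < 1) (t : ℝ) (ht : |t| ≤ ε * (n * md)) :
    kernelSum n z 0 / (1 + ε) ^ 2 ≤ kernelSum n z t ∧
      kernelSum n z t ≤ kernelSum n z 0 / (1 - ε) ^ 2 := by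
  have hn0 : (0:ℝ) < n := by exact_mod_cast hn
  set ξ : ℂ := Complex.exp (((t / (n : ℝ) : ℝ) : ℂ) * Complex.I) with hξ
  have key : ∀ k < n,
      ((1 - ‖z k‖ ^ 2) / ‖1 - z k‖ ^ 2) / (1 + ε) ^ 2
        ≤ (1 - ‖z k‖ ^ 2) / ‖ξ - z k‖ ^ 2 ∧
      (1 - ‖z k‖ ^ 2) / ‖ξ - z k‖ ^ 2
        ≤ ((1 - ‖z k‖ ^ 2) / ‖1 - z k‖ ^ 2) / (1 - ε) ^ 2 := by
    intro k hk
    set w := z k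
    set d := ‖1 - w‖ with hd
    have hdpos : 0 < d := lt_of_lt_of_le hmd (hlb k hk)
    have hnum : (0:ℝ) ≤ 1 - ‖w‖ ^ 2 := by
      have := (hz k hk).le
      nlinarith [norm_nonneg w]
    have hξ1 : ‖ξ - 1‖ ≤ ε * d := by
      calc ‖ξ - 1‖ ≤ |t / (n : ℝ)| := aux_abs_exp_mul_I_sub_one_le _
        _ ≤ ε * md := by
            rw [abs_div, abs_of_pos hn0, div_le_iff₀ hn0]
            calc |t| ≤ ε * (n * md) := ht
              _ = ε * md * n := by ring
        _ ≤ ε * d := by nlinarith [hlb k hk]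
    have hlow : (1 - ε) * d ≤ ‖ξ - w‖ := by
      have h1 : d ≤ ‖ξ - w‖ + ‖ξ - 1‖ := by
        have h' : (1 : ℂ) - w = (ξ - w) - (ξ - 1) := by ring
        rw [hd, h']
        exact norm_sub_le _ _
      nlinarith
    have hhigh : ‖ξ - w‖ ≤ (1 + ε) * d := by
      have h1 : ‖ξ - w‖ ≤ ‖ξ - 1‖ + ‖1 - w‖ := by
        have h' : ξ - w = (ξ - 1) + (1 - w) := by ring
        rw [h']
        exact norm_add_le _ _
      nlinarith
    have hlowpos : 0 < (1 - ε) * d := by nlinarith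
    have habs0 : 0 ≤ ‖ξ - w‖ := norm_nonneg _
    have hsqpos : 0 < ‖ξ - w‖ ^ 2 := by nlinarith
    constructor
    · rw [div_div]
      apply div_le_div_of_nonneg_left hnum hsqpos
      nlinarith
    · rw [div_div]
      apply div_le_div_of_nonneg_left hnum
        (by nlinarith : (0:ℝ) < ‖1 - w‖ ^ 2 * (1 - ε) ^ 2)
      nlinarith
  constructor
  · rw [kernelSum_zero]
    unfold kernelSum
    rw [mul_div_assoc, Finset.sum_div]
    refine mul_le_mul_of_nonneg_left ?_ (by positivity)
    exact Finset.sum_le_sum (fun k hk => (key k (Finset.mem_range.mp hk)).1)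
  · rw [kernelSum_zero]
    unfold kernelSum
    rw [mul_div_assoc, Finset.sum_div]
    refine mul_le_mul_of_nonneg_left ?_ (by positivity)
    exact Finset.sum_le_sum (fun k hk => (key k (Finset.mem_range.mp hk)).2)

set_option maxHeartbeats 1600000 in
/-- Lemma 4.4 of the paper.  With `h_n` as above, if `{h_n}` converges
almost everywhere on `ℝ` to a nondecreasing function `h`, and
`n · min_{1≤j≤n} |1 - z_{j,n}| → ∞`, then `h` is affine, `h(t) = c₁ t + c₂`, and `{h_n}`
converges to `h` uniformly on compact subsets of `ℝ`. -/
theorem statement16 (h : ℕ → ℝ → ℝ) (z : ℕ → ℕ → ℂ) (hlim : ℝ → ℝ)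
    (hz : ∀ n : ℕ, ∀ k < n, z n k ∈ ball (0 : ℂ) 1)
    (hderiv : ∀ n : ℕ, 1 ≤ n → ∀ t ∈ Set.Ioo (-(Real.pi * n)) (Real.pi * n),
      HasDerivAt (h n) (kernelSum n (z n) t) t)
    (hmono : Monotone hlim)
    (hae : ∀ᵐ t ∂(volume : Measure ℝ), Tendsto (fun n => h n t) atTop (𝓝 (hlim t)))
    (hmin : Tendsto (fun n : ℕ =>
        (n : ℝ) * sInf ((fun k => ‖1 - z n k‖) '' {k : ℕ | k < n}))
      atTop atTop) :
    (∃ c₁ c₂ : ℝ, ∀ t : ℝ, hlim t = c₁ * t + c₂) ∧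
      ∀ K : Set ℝ, IsCompact K → TendstoUniformlyOn (fun n => h n) hlim atTop K := by
  classical
  -- density of the convergence set
  have hSd : ∀ x y : ℝ, x < y → ∃ s, x < s ∧ s < y ∧
      Tendsto (fun n => h n s) atTop (𝓝 (hlim s)) := by
    intro x y hxy
    by_contra hcon
    push_neg at hcon
    have hsub : Set.Ioo x y ⊆ {t | ¬ Tendsto (fun n => h n t) atTop (𝓝 (hlim t))} :=
      fun s hs => hcon s hs.1 hs.2
    have h0 := measure_mono_null hsub (ae_iff.mp hae)
    rw [Real.volume_Ioo] at h0
    have := ENNReal.ofReal_eq_zero.mp h0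
    linarith
  obtain ⟨a, ha0, ha1, haT⟩ := hSd 0 1 one_pos
  obtain ⟨b, hb1, hb2, hbT⟩ := hSd 1 2 one_lt_two
  have hab : a < b := ha1.trans hb1
  set m : ℕ → ℝ := fun n => sInf ((fun k => ‖1 - z n k‖) '' {k : ℕ | k < n})
    with hmdef
  set c : ℕ → ℝ := fun n => kernelSum n (z n) 0 with hcdef
  have hzabs : ∀ n : ℕ, ∀ k < n, ‖z n k‖ < 1 := by
    intro n k hk
    simpa using mem_ball_zero_iff.mp (hz n k hk)
  have hm_lb : ∀ n : ℕ, ∀ k < n, m n ≤ ‖1 - z n k‖ := by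
    intro n k hk
    apply csInf_le
    · exact ⟨0, by rintro r ⟨j, hj, rfl⟩; exact norm_nonneg _⟩
    · exact ⟨k, hk, rfl⟩
  have hcn0 : ∀ n : ℕ, 0 ≤ c n := fun n => kernelSum_nonneg n (z n) (hzabs n) 0
  have hεlim : ∀ R : ℝ, Tendsto (fun n : ℕ => R / ((n:ℝ) * m n)) atTop (𝓝 0) :=
    fun R => hmin.const_div_atTop R
  have hgood : ∀ R : ℝ, 0 < R → ∀ᶠ n : ℕ in atTop,
      1 ≤ n ∧ 2 * R ≤ (n:ℝ) * m n ∧ R < Real.pi * n := by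
    intro R hR
    have hpi : Tendsto (fun n : ℕ => Real.pi * n) atTop atTop :=
      tendsto_natCast_atTop_atTop.const_mul_atTop Real.pi_pos
    exact (eventually_ge_atTop 1).and ((hmin.eventually_ge_atTop (2 * R)).and
      (hpi.eventually_gt_atTop R))
  -- the main two-sided estimate for increments of h n
  have est : ∀ R : ℝ, 0 < R → ∀ n : ℕ, 1 ≤ n → 2 * R ≤ (n:ℝ) * m n → R < Real.pi * n →
      ∀ s ∈ Set.Icc (-R) R, ∀ t ∈ Set.Icc (-R) R, s ≤ t →
        c n / (1 + R / ((n:ℝ) * m n)) ^ 2 * (t - s) ≤ h n t - h n s ∧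
        h n t - h n s ≤ c n / (1 - R / ((n:ℝ) * m n)) ^ 2 * (t - s) := by
    intro R hR n hn1 hnm hnpi s hs t ht hst
    have hn0 : (0:ℝ) < n := by exact_mod_cast hn1
    have hnm0 : 0 < (n:ℝ) * m n := lt_of_lt_of_le (by linarith) hnm
    have hmpos : 0 < m n := by
      by_contra hcon
      push_neg at hcon
      nlinarith
    set ε := R / ((n:ℝ) * m n) with hεdef
    have hε0 : 0 < ε := by positivity
    have hεhalf : ε ≤ 1 / 2 := by rw [hεdef, div_le_iff₀ hnm0]; linarith
    have hεlt : ε < 1 := by linarith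
    have hεR : ε * ((n:ℝ) * m n) = R := div_mul_cancel₀ R (ne_of_gt hnm0)
    have hsub : Set.Icc (-R) R ⊆ Set.Ioo (-(Real.pi * n)) (Real.pi * n) := by
      intro x hx
      exact ⟨by linarith [hx.1], by linarith [hx.2]⟩
    have hks : ∀ x ∈ Set.Icc (-R) R,
        c n / (1 + ε) ^ 2 ≤ kernelSum n (z n) x ∧
          kernelSum n (z n) x ≤ c n / (1 - ε) ^ 2 := by
      intro x hx
      exact kernelSum_est n hn1 (z n) (hzabs n) (m n) hmpos (hm_lb n) ε hε0 hεlt x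
        (by rw [hεR]; exact abs_le.mpr ⟨hx.1, hx.2⟩)
    have hcont : ContinuousOn (h n) (Set.Icc (-R) R) := fun x hx =>
      ((hderiv n hn1 x (hsub hx)).continuousAt).continuousWithinAt
    have hdiff : DifferentiableOn ℝ (h n) (interior (Set.Icc (-R) R)) := by
      rw [interior_Icc]
      exact fun x hx =>
        ((hderiv n hn1 x (hsub (Set.Ioo_subset_Icc_self hx))).differentiableAt).differentiableWithinAt
    constructor
    · refine (convex_Icc (-R) R).mul_sub_le_image_sub_of_le_deriv hcont hdiff ?_ s hs t ht hst
      intro x hx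
      rw [interior_Icc] at hx
      rw [(hderiv n hn1 x (hsub (Set.Ioo_subset_Icc_self hx))).deriv]
      exact (hks x (Set.Ioo_subset_Icc_self hx)).1
    · refine (convex_Icc (-R) R).image_sub_le_mul_sub_of_deriv_le hcont hdiff ?_ s hs t ht hst
      intro x hx
      rw [interior_Icc] at hx
      rw [(hderiv n hn1 x (hsub (Set.Ioo_subset_Icc_self hx))).deriv]
      exact (hks x (Set.Ioo_subset_Icc_self hx)).2
  -- convergence of c n to the slope
  have hbma : (0:ℝ) < b - a := by linarith
  have hamem2 : a ∈ Set.Icc (-(2:ℝ)) 2 := ⟨by linarith, by linarith⟩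
  have hbmem2 : b ∈ Set.Icc (-(2:ℝ)) 2 := ⟨by linarith, by linarith⟩
  have hsq : Tendsto (fun n => c n * (b - a)) atTop (𝓝 (hlim b - hlim a)) := by
    have hlow : Tendsto (fun n => (h n b - h n a) * (1 - 2 / ((n:ℝ) * m n)) ^ 2) atTop
        (𝓝 (hlim b - hlim a)) := by
      have := (hbT.sub haT).mul (((tendsto_const_nhds : Tendsto (fun _ : ℕ => (1:ℝ)) atTop _).sub
        (hεlim 2)).pow 2)
      simpa using this
    have hhigh : Tendsto (fun n => (h n b - h n a) * (1 + 2 / ((n:ℝ) * m n)) ^ 2) atTop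
        (𝓝 (hlim b - hlim a)) := by
      have := (hbT.sub haT).mul (((tendsto_const_nhds : Tendsto (fun _ : ℕ => (1:ℝ)) atTop _).add
        (hεlim 2)).pow 2)
      simpa using this
    apply tendsto_of_tendsto_of_tendsto_of_le_of_le' hlow hhigh
    · filter_upwards [hgood 2 two_pos] with n hn
      obtain ⟨hn1, hnm, hnpi⟩ := hn
      have hnm0 : 0 < (n:ℝ) * m n := lt_of_lt_of_le (by linarith) hnm
      have hεhalf : 2 / ((n:ℝ) * m n) ≤ 1 / 2 := by rw [div_le_iff₀ hnm0]; linarith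
      have hε0 : 0 < 2 / ((n:ℝ) * m n) := by positivity
      have h2 := (est 2 two_pos n hn1 hnm hnpi a hamem2 b hbmem2 hab.le).2
      rw [div_mul_eq_mul_div, le_div_iff₀ (by nlinarith)] at h2
      linarith
    · filter_upwards [hgood 2 two_pos] with n hn
      obtain ⟨hn1, hnm, hnpi⟩ := hn
      have hnm0 : 0 < (n:ℝ) * m n := lt_of_lt_of_le (by linarith) hnm
      have hε0 : 0 < 2 / ((n:ℝ) * m n) := by positivity
      have h1 := (est 2 two_pos n hn1 hnm hnpi a hamem2 b hbmem2 hab.le).1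
      rw [div_mul_eq_mul_div, div_le_iff₀ (by nlinarith)] at h1
      linarith
  set c₁ : ℝ := (hlim b - hlim a) / (b - a) with hc₁def
  have hclim : Tendsto c atTop (𝓝 c₁) := by
    have := hsq.div_const (b - a)
    simpa [mul_div_assoc, div_self (ne_of_gt hbma)] using this
  set c₂ : ℝ := hlim a - c₁ * a with hc₂def
  -- the key uniform estimate on [-R, R]
  have key : ∀ R : ℝ, 2 ≤ R → ∀ δ : ℝ, 0 < δ → ∀ᶠ n : ℕ in atTop,
      ∀ t ∈ Set.Icc (-R) R, |h n t - (c₁ * t + c₂)| < δ := by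
    intro R hR δ hδ
    have hRpos : (0:ℝ) < R := by linarith
    have hE : Tendsto (fun n => |h n a - hlim a| + |c n - c₁| * (2 * R) +
        c n * (2 * R) * (((1 - R / ((n:ℝ) * m n)) ^ 2)⁻¹ - ((1 + R / ((n:ℝ) * m n)) ^ 2)⁻¹))
        atTop (𝓝 0) := by
      have e1 : Tendsto (fun n => |h n a - hlim a|) atTop (𝓝 0) := by
        have := (haT.sub (tendsto_const_nhds : Tendsto (fun _ : ℕ => hlim a) atTop _)).abs
        simpa using this
      have e2 : Tendsto (fun n => |c n - c₁| * (2 * R)) atTop (𝓝 0) := by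
        have := ((hclim.sub (tendsto_const_nhds : Tendsto (fun _ : ℕ => c₁) atTop _)).abs).mul_const
          (2 * R)
        simpa using this
      have e3 : Tendsto (fun n =>
          c n * (2 * R) * (((1 - R / ((n:ℝ) * m n)) ^ 2)⁻¹ - ((1 + R / ((n:ℝ) * m n)) ^ 2)⁻¹))
          atTop (𝓝 0) := by
        have hD : Tendsto (fun n : ℕ =>
            ((1 - R / ((n:ℝ) * m n)) ^ 2)⁻¹ - ((1 + R / ((n:ℝ) * m n)) ^ 2)⁻¹) atTop (𝓝 0) := by
          have hone : Tendsto (fun n : ℕ => (1 - R / ((n:ℝ) * m n)) ^ 2) atTop (𝓝 1) := by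
            have := ((tendsto_const_nhds : Tendsto (fun _ : ℕ => (1:ℝ)) atTop _).sub
              (hεlim R)).pow 2
            simpa using this
          have hone' : Tendsto (fun n : ℕ => (1 + R / ((n:ℝ) * m n)) ^ 2) atTop (𝓝 1) := by
            have := ((tendsto_const_nhds : Tendsto (fun _ : ℕ => (1:ℝ)) atTop _).add
              (hεlim R)).pow 2
            simpa using this
          have := (hone.inv₀ one_ne_zero).sub (hone'.inv₀ one_ne_zero)
          simpa using this
        have := (hclim.mul_const (2 * R)).mul hD
        simpa using this
      have := (e1.add e2).add e3
      simpa using this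
    filter_upwards [hgood R hRpos, hE.eventually_lt_const hδ] with n hn hEn t htmem
    obtain ⟨hn1, hnm, hnpi⟩ := hn
    have hn0 : (0:ℝ) < n := by exact_mod_cast hn1
    have hnm0 : 0 < (n:ℝ) * m n := lt_of_lt_of_le (by linarith) hnm
    set ε := R / ((n:ℝ) * m n) with hεdef
    have hε0 : 0 < ε := by positivity
    have hεhalf : ε ≤ 1 / 2 := by rw [hεdef, div_le_iff₀ hnm0]; linarith
    set i1 : ℝ := ((1 + ε) ^ 2)⁻¹ with hi1def
    set i2 : ℝ := ((1 - ε) ^ 2)⁻¹ with hi2def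
    have hi1le : i1 ≤ 1 := by
      rw [hi1def]
      exact inv_le_one_of_one_le₀ (by nlinarith)
    have hi2ge : 1 ≤ i2 := by
      rw [hi2def]
      exact (one_le_inv₀ (by nlinarith : (0:ℝ) < (1 - ε) ^ 2)).mpr (by nlinarith)
    have hi1pos : 0 < i1 := by rw [hi1def]; positivity
    have hamem : a ∈ Set.Icc (-R) R := ⟨by linarith, by linarith⟩
    have hclaim : ∀ s ∈ Set.Icc (-R) R, ∀ u ∈ Set.Icc (-R) R, s ≤ u →
        |h n u - h n s - c n * (u - s)| ≤ c n * (2 * R) * (i2 - i1) := by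
      intro s hs u hu hsu
      obtain ⟨l1, l2⟩ := est R hRpos n hn1 hnm hnpi s hs u hu hsu
      rw [div_eq_mul_inv, ← hi1def] at l1
      rw [div_eq_mul_inv, ← hi2def] at l2
      have hus : (0:ℝ) ≤ u - s := by linarith
      have hus2R : u - s ≤ 2 * R := by
        have := hs.1; have := hu.2; linarith
      have hc2R : 0 ≤ c n * (2 * R) := mul_nonneg (hcn0 n) (by linarith)
      have q1 : c n * (u - s) * (i2 - 1) ≤ c n * (2 * R) * (i2 - 1) :=
        mul_le_mul_of_nonneg_right (mul_le_mul_of_nonneg_left hus2R (hcn0 n)) (by linarith)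
      have q2 : c n * (u - s) * (1 - i1) ≤ c n * (2 * R) * (1 - i1) :=
        mul_le_mul_of_nonneg_right (mul_le_mul_of_nonneg_left hus2R (hcn0 n)) (by linarith)
      have q3 : c n * (2 * R) * (i2 - 1) ≤ c n * (2 * R) * (i2 - i1) :=
        mul_le_mul_of_nonneg_left (by linarith) hc2R
      have q4 : c n * (2 * R) * (1 - i1) ≤ c n * (2 * R) * (i2 - i1) :=
        mul_le_mul_of_nonneg_left (by linarith) hc2R
      rw [abs_le]
      constructor
      · have e : c n * i1 * (u - s) - c n * (u - s) = -(c n * (u - s) * (1 - i1)) := by ring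
        linarith
      · have e : c n * i2 * (u - s) - c n * (u - s) = c n * (u - s) * (i2 - 1) := by ring
        linarith
    have key3 : |h n t - h n a - c n * (t - a)| ≤ c n * (2 * R) * (i2 - i1) := by
      rcases le_total a t with hat | hta
      · exact hclaim a hamem t htmem hat
      · have h' := hclaim t htmem a hamem hta
        have e : h n t - h n a - c n * (t - a) = -(h n a - h n t - c n * (a - t)) := by ring
        rw [e, abs_neg]
        exact h'
    have hta2R : |t - a| ≤ 2 * R := by
      rw [abs_le]
      constructor <;> [linarith [htmem.1]; linarith [htmem.2]]
    have efin : h n t - (c₁ * t + c₂) =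
        (h n a - hlim a) + (c n - c₁) * (t - a) + (h n t - h n a - c n * (t - a)) := by
      rw [hc₂def]; ring
    have hfin : |h n t - (c₁ * t + c₂)| ≤ |h n a - hlim a| + |c n - c₁| * (2 * R) +
        c n * (2 * R) * (i2 - i1) := by
      have habs3 : |h n t - (c₁ * t + c₂)| ≤
          |h n a - hlim a| + |(c n - c₁) * (t - a)| + |h n t - h n a - c n * (t - a)| := by
        rw [efin]; exact abs_add_three _ _ _
      have h2 : |(c n - c₁) * (t - a)| ≤ |c n - c₁| * (2 * R) := by
        rw [abs_mul]
        exact mul_le_mul_of_nonneg_left hta2R (abs_nonneg _)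
      linarith
    exact lt_of_le_of_lt hfin hEn
  -- every h n t converges to the affine function
  have haff : ∀ t : ℝ, Tendsto (fun n => h n t) atTop (𝓝 (c₁ * t + c₂)) := by
    intro t
    rw [Metric.tendsto_atTop]
    intro δ hδ
    obtain ⟨N, hN⟩ := eventually_atTop.mp (key (max 2 |t|) (le_max_left _ _) δ hδ)
    refine ⟨N, fun n hn => ?_⟩
    rw [Real.dist_eq]
    refine hN n hn t ⟨?_, ?_⟩
    · have h1 : |t| ≤ max 2 |t| := le_max_right _ _
      have h2 : -t ≤ |t| := neg_le_abs t
      linarith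
    · exact le_trans (le_abs_self t) (le_max_right _ _)
  -- hlim is affine
  have hall : ∀ t : ℝ, hlim t = c₁ * t + c₂ := by
    have haffS : ∀ s : ℝ, Tendsto (fun n => h n s) atTop (𝓝 (hlim s)) →
        hlim s = c₁ * s + c₂ := fun s hs => tendsto_nhds_unique hs (haff s)
    intro t
    have hup : ∀ δ : ℝ, 0 < δ → hlim t ≤ c₁ * t + c₂ + |c₁| * δ := by
      intro δ hδ
      obtain ⟨u, hu1, hu2, huT⟩ := hSd t (t + δ) (by linarith)
      have hmle : hlim t ≤ hlim u := hmono hu1.le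
      rw [haffS u huT] at hmle
      have h1 : c₁ * (u - t) ≤ |c₁| * δ := by
        calc c₁ * (u - t) ≤ |c₁ * (u - t)| := le_abs_self _
          _ = |c₁| * |u - t| := abs_mul _ _
          _ ≤ |c₁| * δ := by
              apply mul_le_mul_of_nonneg_left _ (abs_nonneg c₁)
              rw [abs_of_pos (by linarith : (0:ℝ) < u - t)]
              linarith
      nlinarith [h1]
    have hdown : ∀ δ : ℝ, 0 < δ → c₁ * t + c₂ - |c₁| * δ ≤ hlim t := by
      intro δ hδ
      obtain ⟨u, hu1, hu2, huT⟩ := hSd (t - δ) t (by linarith)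
      have hmle : hlim u ≤ hlim t := hmono hu2.le
      rw [haffS u huT] at hmle
      have h1 : c₁ * (t - u) ≤ |c₁| * δ := by
        calc c₁ * (t - u) ≤ |c₁ * (t - u)| := le_abs_self _
          _ = |c₁| * |t - u| := abs_mul _ _
          _ ≤ |c₁| * δ := by
              apply mul_le_mul_of_nonneg_left _ (abs_nonneg c₁)
              rw [abs_of_pos (by linarith : (0:ℝ) < t - u)]
              linarith
      nlinarith [h1]
    have h1 : hlim t ≤ c₁ * t + c₂ := by
      by_contra hcon
      push_neg at hcon
      set δ := (hlim t - (c₁ * t + c₂)) / (|c₁| + 1) with hδdef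
      have habs : (0:ℝ) < |c₁| + 1 := by positivity
      have hδ : 0 < δ := div_pos (by linarith) habs
      have := hup δ hδ
      have h3 : (|c₁| + 1) * δ = hlim t - (c₁ * t + c₂) := by
        rw [hδdef]; field_simp
      nlinarith
    have h2 : c₁ * t + c₂ ≤ hlim t := by
      by_contra hcon
      push_neg at hcon
      set δ := ((c₁ * t + c₂) - hlim t) / (|c₁| + 1) with hδdef
      have habs : (0:ℝ) < |c₁| + 1 := by positivity
      have hδ : 0 < δ := div_pos (by linarith) habs
      have := hdown δ hδ
      have h3 : (|c₁| + 1) * δ = (c₁ * t + c₂) - hlim t := by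
        rw [hδdef]; field_simp
      nlinarith
    linarith
  refine ⟨⟨c₁, c₂, hall⟩, ?_⟩
  intro K hK
  rw [Metric.tendstoUniformlyOn_iff]
  intro δ hδ
  obtain ⟨R0, hR0⟩ := hK.isBounded.subset_closedBall 0
  set R := max 2 R0 with hRdef
  have hKsub : K ⊆ Set.Icc (-R) R := by
    intro t ht
    have h' := hR0 ht
    rw [Real.closedBall_eq_Icc] at h'
    have hR0R : R0 ≤ R := le_max_right _ _
    exact ⟨by have := h'.1; simp at this ⊢; linarith, by have := h'.2; simp at this ⊢; linarith⟩
  filter_upwards [key R (le_max_left _ _) δ hδ] with n hn t htK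
  rw [Real.dist_eq, hall t, abs_sub_comm]
  exact hn t (hKsub htK)

end
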